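/- arXiv:1504.08334 — 4 statements merged into one kernel-verified Lean document; each statement's English description precedes it below -/
import Mathlib

section
/- Let q be odd and let φ(x) = (x - f·g^d)² + g with f, g ∈ 𝔽_q[t], -g not a square in 𝔽_q(t), d ≥ 1, and suppose the j-invariant of E_φ : Y² = (X - g)·φ(X) is non-constant. Then no element of the adjusted critical orbit {-φ(γ), φ²(γ), φ³(γ), …} (where γ = f·g^d) is a square in 𝔽_q(t). -/
open Polynomial

/-- The Weierstrass model of `E_φ : Y² = (X - g)·((X - γ)² + g)` with `γ = f·g^d`,
obtained by expanding the cubic. -/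
noncomputable def Ephi {Fq : Type*} [Field Fq] (f g : Fq[X]) (d : ℕ) :
    WeierstrassCurve (RatFunc Fq) :=
  let γ : RatFunc Fq := algebraMap Fq[X] (RatFunc Fq) (f * g ^ d)
  let G : RatFunc Fq := algebraMap Fq[X] (RatFunc Fq) g
  { a₁ := 0
    a₂ := -(2 * γ + G)
    a₃ := 0
    a₄ := γ ^ 2 + G + 2 * γ * G
    a₆ := -(G * (γ ^ 2 + G)) }

lemma Ephi_c4_eq {Fq : Type*} [Field Fq] (f g : Fq[X]) (d : ℕ) :
    (Ephi f g d).c₄ = 16 * ((algebraMap Fq[X] (RatFunc Fq) (f * g ^ d)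
      - algebraMap Fq[X] (RatFunc Fq) g) ^ 2 - 3 * algebraMap Fq[X] (RatFunc Fq) g) := by
  simp only [Ephi, WeierstrassCurve.c₄, WeierstrassCurve.b₂, WeierstrassCurve.b₄]
  ring

lemma Ephi_Δ_eq {Fq : Type*} [Field Fq] (f g : Fq[X]) (d : ℕ) :
    (Ephi f g d).Δ = -64 * algebraMap Fq[X] (RatFunc Fq) g *
      ((algebraMap Fq[X] (RatFunc Fq) g - algebraMap Fq[X] (RatFunc Fq) (f * g ^ d)) ^ 2
        + algebraMap Fq[X] (RatFunc Fq) g) ^ 2 := by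
  simp only [Ephi, WeierstrassCurve.Δ, WeierstrassCurve.b₂, WeierstrassCurve.b₄,
    WeierstrassCurve.b₆, WeierstrassCurve.b₈]
  ring

lemma aux_C2eq {Fq : Type*} [Field Fq] : (C (2:Fq) : Fq[X]) = 2 := map_ofNat C 2

/-- A polynomial which becomes a square in `𝔽_q(t)` is a square of a polynomial. -/
lemma aux_sq_extract {Fq : Type*} [Field Fq] {p : Fq[X]}
    (h : IsSquare (algebraMap Fq[X] (RatFunc Fq) p)) : ∃ v : Fq[X], p = v * v := by
  obtain ⟨u, hu⟩ := h
  have hint : IsIntegral Fq[X] u := by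
    refine ⟨X ^ 2 - C p, monic_X_pow_sub_C p two_ne_zero, ?_⟩
    simp [eval₂_sub, eval₂_pow, hu, sq]
  obtain ⟨v, hv⟩ := IsIntegrallyClosed.isIntegral_iff.mp hint
  refine ⟨v, IsFractionRing.injective Fq[X] (RatFunc Fq) ?_⟩
  rw [map_mul, hv, ← hu]

/-- Degree obstruction: `v² = a² + g` is impossible if `deg a > deg g`. -/
lemma aux_caseA {Fq : Type*} [Field Fq] (h2 : (2 : Fq) ≠ 0) {a v g : Fq[X]} (hg : g ≠ 0)
    (hdeg : g.natDegree < a.natDegree) (hv : v * v = a * a + g) : False := by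
  have hrs : (v - a) * (v + a) = g := by linear_combination hv
  have hr : v - a ≠ 0 := by rintro h; rw [h, zero_mul] at hrs; exact hg hrs.symm
  have hs : v + a ≠ 0 := by rintro h; rw [h, mul_zero] at hrs; exact hg hrs.symm
  have hsum : (v - a).natDegree + (v + a).natDegree = g.natDegree := by
    rw [← natDegree_mul hr hs, hrs]
  have haeq : C (2 : Fq)⁻¹ * ((v + a) - (v - a)) = a := by
    have h' : ((v + a) - (v - a)) = C (2:Fq) * a := by rw [aux_C2eq]; ring
    rw [h', ← mul_assoc, ← C_mul, inv_mul_cancel₀ h2, C_1, one_mul]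
  have : a.natDegree ≤ g.natDegree := by
    calc a.natDegree = (C (2 : Fq)⁻¹ * ((v + a) - (v - a))).natDegree := by rw [haeq]
    _ ≤ ((v + a) - (v - a)).natDegree := natDegree_C_mul_le _ _
    _ ≤ max (v + a).natDegree (v - a).natDegree := natDegree_sub_le _ _
    _ ≤ (v - a).natDegree + (v + a).natDegree := by omega
    _ = g.natDegree := hsum
  omega

lemma aux_caseB_inner {Fq : Type*} [Field Fq] (h2 : (2 : Fq) ≠ 0) {g v : Fq[X]} {e : Fq}
    (hD : 1 ≤ g.natDegree)
    (hv : v * v = (C e * g) * (C e * g) + g)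
    (hns : (v + C e * g).natDegree = g.natDegree) (hnr : (v - C e * g).natDegree = 0) :
    False := by
  set s := v + C e * g with hs_def
  set ε := (v - C e * g).coeff 0 with hε_def
  have hg0 : g ≠ 0 := by rintro rfl; simp at hD
  have hrC : v - C e * g = C ε := eq_C_of_natDegree_eq_zero hnr
  have hε0 : ε ≠ 0 := by
    rintro h; rw [h, C_0] at hrC
    have hz : (v - C e * g) * s = g := by rw [hs_def]; linear_combination hv
    rw [hrC, zero_mul] at hz; exact hg0 hz.symm
  have hg : C ε * s = g := by rw [hs_def, ← hrC]; linear_combination hv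
  have hCε : s - 2 * (C e * g) = C ε := by rw [hs_def, ← hrC]; ring
  have key : s * C (1 - 2 * e * ε) = C ε := by
    have hexp : (C (1 - 2 * e * ε) : Fq[X]) = 1 - 2 * (C e * C ε) := by
      rw [C_sub, C_mul, C_mul, C_1, aux_C2eq]; ring
    rw [hexp]
    linear_combination hCε - 2 * C e * hg
  by_cases hk : (1 : Fq) - 2 * e * ε = 0
  · rw [hk, C_0, mul_zero] at key
    exact hε0 (C_eq_zero.mp key.symm)
  · have hs0 : s ≠ 0 := by rintro h; rw [h, mul_zero] at hg; exact hg0 hg.symm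
    have hnd : (s * C (1 - 2 * e * ε)).natDegree = g.natDegree := by
      rw [natDegree_mul hs0 (fun h => hk (C_eq_zero.mp h)), natDegree_C, add_zero, hns]
    rw [key, natDegree_C] at hnd; omega

/-- Degree/factorization obstruction: `v² = (e·g)² + g` is impossible for
`e ≠ 0` and `g` non-constant. -/
lemma aux_caseB {Fq : Type*} [Field Fq] (h2 : (2 : Fq) ≠ 0) {g v : Fq[X]} {e : Fq}
    (hD : 1 ≤ g.natDegree) (he : e ≠ 0)
    (hv : v * v = (C e * g) * (C e * g) + g) : False := by
  have hg0 : g ≠ 0 := by rintro rfl; simp at hD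
  have hrs : (v - C e * g) * (v + C e * g) = g := by linear_combination hv
  have hr : v - C e * g ≠ 0 := by rintro h; rw [h, zero_mul] at hrs; exact hg0 hrs.symm
  have hs : v + C e * g ≠ 0 := by rintro h; rw [h, mul_zero] at hrs; exact hg0 hrs.symm
  have hsum : (v - C e * g).natDegree + (v + C e * g).natDegree = g.natDegree := by
    rw [← natDegree_mul hr hs, hrs]
  have hmax : g.natDegree ≤ max (v + C e * g).natDegree (v - C e * g).natDegree := by
    have h1 : ((v + C e * g) - (v - C e * g)).natDegree = g.natDegree := by
      have h' : (v + C e * g) - (v - C e * g) = C (2 * e) * g := by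
        rw [C_mul, aux_C2eq]; ring
      rw [h', natDegree_C_mul (mul_ne_zero h2 he)]
    calc g.natDegree = _ := h1.symm
      _ ≤ _ := natDegree_sub_le _ _
  rcases (by omega : (v - C e * g).natDegree = 0 ∧ (v + C e * g).natDegree = g.natDegree ∨
      (v + C e * g).natDegree = 0 ∧ (v - C e * g).natDegree = g.natDegree) with
    ⟨h1, h2'⟩ | ⟨h1, h2'⟩
  · exact aux_caseB_inner h2 hD hv h2' h1
  · refine aux_caseB_inner h2 hD (v := -v) (by linear_combination hv) ?_ ?_
    · rw [show -v + C e * g = -(v - C e * g) by ring, natDegree_neg]; exact h2'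
    · rw [show -v - C e * g = -(v + C e * g) by ring, natDegree_neg]; exact h1

/-- Degrees in the orbit grow, provided the second iterate has large degree. -/
lemma aux_grow {Fq : Type*} [Field Fq] (γ g : Fq[X])
    (hg2 : g.natDegree < 2 * (g - γ).natDegree)
    (hγ2 : γ.natDegree < 2 * (g - γ).natDegree) :
    ∀ m, 2 ≤ m →
      g.natDegree < ((fun x => (x - γ) ^ 2 + g)^[m] γ).natDegree ∧
      γ.natDegree < ((fun x => (x - γ) ^ 2 + g)^[m] γ).natDegree := by
  intro m hm
  induction m, hm using Nat.le_induction with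
  | base =>
    have h1 : (fun x => (x - γ) ^ 2 + g)^[2] γ = (g - γ) ^ 2 + g := by
      rw [show (2:ℕ) = 1 + 1 from rfl, Function.iterate_succ_apply',
        Function.iterate_one]
      simp
    rw [h1, natDegree_add_eq_left_of_natDegree_lt (by rw [natDegree_pow]; omega),
      natDegree_pow]
    omega
  | succ m hm ih =>
    obtain ⟨ihg, ihγ⟩ := ih
    have h1 : (fun x => (x - γ) ^ 2 + g)^[m + 1] γ
        = ((fun x => (x - γ) ^ 2 + g)^[m] γ - γ) ^ 2 + g := by
      rw [Function.iterate_succ_apply']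
    have h2 : ((fun x => (x - γ) ^ 2 + g)^[m] γ - γ).natDegree
        = ((fun x => (x - γ) ^ 2 + g)^[m] γ).natDegree :=
      natDegree_sub_eq_left_of_natDegree_lt ihγ
    rw [h1, natDegree_add_eq_left_of_natDegree_lt (by rw [natDegree_pow, h2]; omega),
      natDegree_pow, h2]
    omega

/-- if `q` is odd, `-g` is not a square in `𝔽_q(t)`, and the `j`-invariant
of `E_φ` is non-constant, then no element of the adjusted critical orbit
`{-φ(γ)} ∪ {φⁿ(γ) : n ≥ 2}` is a square in `𝔽_q(t)`. -/
theorem adjusted_critical_orbit_no_squares {Fq : Type*} [Field Fq] [Fintype Fq]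
    (hq : Odd (Fintype.card Fq)) (f g : Fq[X]) (d : ℕ) (hd : 1 ≤ d)
    (hns : ¬ IsSquare (-(algebraMap Fq[X] (RatFunc Fq) g)))
    (hΔ : (Ephi f g d).Δ ≠ 0)
    (hj : ¬ ∃ r : Fq, (Ephi f g d).c₄ ^ 3 / (Ephi f g d).Δ = RatFunc.C r) :
    ¬ IsSquare (-(algebraMap Fq[X] (RatFunc Fq) g)) ∧
    ∀ n, 2 ≤ n →
      ¬ IsSquare (algebraMap Fq[X] (RatFunc Fq)
        ((fun x => (x - f * g ^ d) ^ 2 + g)^[n] (f * g ^ d))) := by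
  have h2 : (2 : Fq) ≠ 0 := by
    intro h
    have hdvd : ringChar Fq ∣ 2 := ringChar.dvd (by exact_mod_cast h)
    have hch : ringChar Fq = 2 :=
      Or.resolve_left ((Nat.dvd_prime Nat.prime_two).1 hdvd) CharP.ringChar_ne_one
    have heven := FiniteField.even_card_of_char_two hch
    have hodd := Nat.odd_iff.mp hq
    omega
  have hg0 : g ≠ 0 := by
    rintro rfl
    exact hns (by rw [map_zero, neg_zero]; exact IsSquare.zero)
  refine ⟨hns, ?_⟩
  intro n hn hsq
  set γp := f * g ^ d with hγp
  obtain ⟨v, hv⟩ := aux_sq_extract hsq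
  -- Degenerate case γp = g : j-invariant is 1728, constant.
  by_cases hγg : γp = g
  · apply hj
    refine ⟨1728, ?_⟩
    have hc : (Ephi f g d).c₄ ^ 3 = 1728 * (Ephi f g d).Δ := by
      rw [Ephi_c4_eq, Ephi_Δ_eq, ← hγp, hγg]; ring
    rw [hc, mul_div_assoc, div_self hΔ, mul_one]
    exact (map_ofNat _ 1728).symm
  -- Degenerate case: both γp and g are constants, hence j is constant.
  by_cases hDγ : g.natDegree = 0 ∧ γp.natDegree = 0
  · apply hj
    obtain ⟨b, hb⟩ := natDegree_eq_zero.mp hDγ.1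
    obtain ⟨a, ha⟩ := natDegree_eq_zero.mp hDγ.2
    refine ⟨(16 * ((a - b) ^ 2 - 3 * b)) ^ 3 / (-64 * b * ((b - a) ^ 2 + b) ^ 2), ?_⟩
    rw [Ephi_c4_eq, Ephi_Δ_eq, ← hγp, ← ha, ← hb, RatFunc.algebraMap_C, RatFunc.algebraMap_C,
      map_div₀]
    push_cast [map_pow, map_mul, map_sub, map_add, map_neg, map_ofNat]
    ring
  -- Main cases.
  have hstep : (g.natDegree < 2 * (g - γp).natDegree ∧
      γp.natDegree < 2 * (g - γp).natDegree) ∧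
      (v * v = (g - γp) * (g - γp) + g → False) := by
    rcases lt_or_ge g.natDegree γp.natDegree with hlt | hle
    · -- deg γp > deg g
      have hsub : (g - γp).natDegree = γp.natDegree := by
        rw [show g - γp = -(γp - g) by ring, natDegree_neg,
          natDegree_sub_eq_left_of_natDegree_lt hlt]
      exact ⟨⟨by omega, by omega⟩, fun hv' =>
        aux_caseA h2 hg0 (a := g - γp) (by omega) hv'⟩
    · -- deg γp ≤ deg g : then γp = c · g with c ≠ 1
      have hD1 : 1 ≤ g.natDegree := by
        rcases Nat.eq_zero_or_pos g.natDegree with h | h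
        · exact absurd ⟨h, by omega⟩ hDγ
        · exact h
      obtain ⟨c, hc, hc1⟩ : ∃ c : Fq, γp = C c * g ∧ c ≠ 1 := by
        by_cases hf : f = 0
        · exact ⟨0, by simp [hγp, hf], by norm_num⟩
        · have hgd : γp.natDegree = f.natDegree + d * g.natDegree := by
            rw [hγp, natDegree_mul hf (pow_ne_zero _ hg0), natDegree_pow]
          have hd1 : d = 1 := by
            have hdD : d * g.natDegree ≤ 1 * g.natDegree := by omega
            have h' : d ≤ 1 := Nat.le_of_mul_le_mul_right hdD hD1
            omega
          rw [hd1, one_mul] at hgd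
          have hf0 : f.natDegree = 0 := by omega
          obtain ⟨cf, hcf⟩ := natDegree_eq_zero.mp hf0
          refine ⟨cf, by rw [hγp, hd1, pow_one, hcf], ?_⟩
          rintro rfl
          exact hγg (by rw [hγp, hd1, pow_one, ← hcf, C_1, one_mul])
      have he : (1 : Fq) - c ≠ 0 := sub_ne_zero.mpr (Ne.symm hc1)
      have hsub : g - γp = C (1 - c) * g := by rw [hc, C_sub, C_1]; ring
      have hsubdeg : (g - γp).natDegree = g.natDegree := by
        rw [hsub, natDegree_C_mul he]
      have hγd : γp.natDegree ≤ g.natDegree := hle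
      refine ⟨⟨by omega, by omega⟩, fun hv' => ?_⟩
      rw [hsub] at hv'
      exact aux_caseB h2 hD1 he hv'
  obtain ⟨⟨hb1, hb2⟩, hn2⟩ := hstep
  have hgrow := aux_grow γp g hb1 hb2
  rcases eq_or_lt_of_le hn with h2n | h3n
  · -- n = 2
    rw [← h2n] at hv
    have hφ2 : (fun x => (x - γp) ^ 2 + g)^[2] γp = (g - γp) ^ 2 + g := by
      rw [show (2:ℕ) = 1 + 1 from rfl, Function.iterate_succ_apply',
        Function.iterate_one]
      simp
    rw [hφ2] at hv
    exact hn2 (by linear_combination -hv)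
  · -- n ≥ 3
    have hiter : (fun x => (x - γp) ^ 2 + g)^[n] γp
        = ((fun x => (x - γp) ^ 2 + g)^[n-1] γp - γp) ^ 2 + g := by
      rw [show n = (n - 1) + 1 by omega, Function.iterate_succ_apply']
      simp
    obtain ⟨hdg, hdγ⟩ := hgrow (n - 1) (by omega)
    have hadeg : g.natDegree <
        ((fun x => (x - γp) ^ 2 + g)^[n-1] γp - γp).natDegree := by
      rw [natDegree_sub_eq_left_of_natDegree_lt hdγ]; exact hdg
    rw [hiter] at hv
    exact aux_caseA h2 hg0 (v := v) hadeg (by linear_combination -hv)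
end

section
/- Let φ(x) = (x - f·g^d)² + g with f, g ∈ 𝔽_q[t], h = g - f·g^d, and γ = f·g^d. For all n ≥ 2, deg(φ^n(γ)) ≤ max{2^{n-1}·deg(h), deg(g)}, with equality when the two quantities are unequal. Consequently, if deg(h) ≥ 1, then deg(φ^n(γ)) = 2^{n-1}·deg(h) for all sufficiently large n, and in particular the critical orbit of φ is infinite (φ is post-critically infinite). -/
open Polynomial

private lemma iter_shift {Fq : Type*} [Field Fq] (g γ : Fq[X]) (n : ℕ) :
    (fun x => (x - γ) ^ 2 + g)^[n + 1] γ =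
      (fun x => x ^ 2 + (g - γ))^[n] (g - γ) + γ := by
  induction n with
  | zero => simp
  | succ n ih =>
    rw [Function.iterate_succ_apply', ih, Function.iterate_succ_apply']
    show ((_ + γ) - γ)^2 + g = _^2 + (g - γ) + γ
    ring

private lemma psi_deg {Fq : Type*} [Field Fq] (h : Fq[X]) (n : ℕ) :
    ((fun x => x ^ 2 + h)^[n] h).natDegree ≤ 2 ^ n * h.natDegree ∧
    (1 ≤ h.natDegree →
      ((fun x => x ^ 2 + h)^[n] h).natDegree = 2 ^ n * h.natDegree) := by
  induction n with
  | zero => simp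
  | succ n ih =>
    rw [Function.iterate_succ_apply']
    show ( _ ^2 + h).natDegree ≤ _ ∧ _
    set b := (fun x => x ^ 2 + h)^[n] h with hb
    constructor
    · refine (natDegree_add_le _ _).trans (max_le ?_ ?_)
      · rw [natDegree_pow, pow_succ, mul_comm (2^n) 2, mul_assoc]
        exact Nat.mul_le_mul_left 2 ih.1
      · exact Nat.le_mul_of_pos_left _ (by positivity)
    · intro hH
      have hbd : (b ^ 2).natDegree = 2 ^ (n + 1) * h.natDegree := by
        rw [natDegree_pow, ih.2 hH]; ring
      have hlt : h.natDegree < (b ^ 2).natDegree := by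
        rw [hbd]
        have h2 : 2 * h.natDegree ≤ 2 ^ (n + 1) * h.natDegree :=
          Nat.mul_le_mul_right _ (by simpa using Nat.pow_le_pow_right (by norm_num) (by omega : 1 ≤ n + 1))
        omega
      rw [natDegree_add_eq_left_of_natDegree_lt hlt, hbd]

/-- degree growth of the critical orbit of `φ(x) = (x - f·g^d)² + g`.
For `n ≥ 2`, `deg φⁿ(γ) ≤ max(2^{n-1}·deg h, deg g)` with equality when the two
quantities differ; if `deg h ≥ 1` then `deg φⁿ(γ) = 2^{n-1}·deg h` for large `n`
and the critical orbit is infinite. -/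
theorem degree_critical_orbit {Fq : Type*} [Field Fq] (f g : Fq[X]) (d : ℕ) (hd : 1 ≤ d) :
    (∀ n, 2 ≤ n →
      ((fun x => (x - f * g ^ d) ^ 2 + g)^[n] (f * g ^ d)).natDegree ≤
        max (2 ^ (n - 1) * (g - f * g ^ d).natDegree) g.natDegree ∧
      (2 ^ (n - 1) * (g - f * g ^ d).natDegree ≠ g.natDegree →
        ((fun x => (x - f * g ^ d) ^ 2 + g)^[n] (f * g ^ d)).natDegree =
          max (2 ^ (n - 1) * (g - f * g ^ d).natDegree) g.natDegree)) ∧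
    (1 ≤ (g - f * g ^ d).natDegree →
      (∃ N, ∀ n, N ≤ n →
        ((fun x => (x - f * g ^ d) ^ 2 + g)^[n] (f * g ^ d)).natDegree =
          2 ^ (n - 1) * (g - f * g ^ d).natDegree) ∧
      (Set.range fun n : ℕ =>
        (fun x => (x - f * g ^ d) ^ 2 + g)^[n] (f * g ^ d)).Infinite) := by
  set γ := f * g ^ d with hγ
  set h := g - γ with hh
  set H := h.natDegree with hH
  -- key formula: for n ≥ 2, φ^[n] γ = (ψ^[n-2] h)^2 + g
  have key : ∀ n, 2 ≤ n → (fun x => (x - γ) ^ 2 + g)^[n] γ =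
      ((fun x => x ^ 2 + h)^[n - 2] h) ^ 2 + g := by
    intro n hn
    obtain ⟨m, rfl⟩ : ∃ m, n = m + 2 := ⟨n - 2, by omega⟩
    have := iter_shift g γ (m + 1)
    rw [show m + 2 = (m + 1) + 1 from rfl, this, Function.iterate_succ_apply',
      show m + 1 + 1 - 2 = m from by omega]
    simp only [hh]
    ring
  have main : ∀ n, 2 ≤ n →
      ((fun x => (x - γ) ^ 2 + g)^[n] γ).natDegree ≤ max (2 ^ (n - 1) * H) g.natDegree ∧
      (2 ^ (n - 1) * H ≠ g.natDegree →
        ((fun x => (x - γ) ^ 2 + g)^[n] γ).natDegree = max (2 ^ (n - 1) * H) g.natDegree) := by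
    intro n hn
    rw [key n hn]
    set b := (fun x => x ^ 2 + h)^[n - 2] h with hb
    have hble : b.natDegree ≤ 2 ^ (n - 2) * H := (psi_deg h (n - 2)).1
    have hb2le : (b ^ 2).natDegree ≤ 2 ^ (n - 1) * H := by
      rw [natDegree_pow]
      calc 2 * b.natDegree ≤ 2 * (2 ^ (n - 2) * H) := Nat.mul_le_mul_left 2 hble
        _ = 2 ^ (n - 1) * H := by
          rw [← mul_assoc, ← pow_succ']
          congr 2
          omega
    constructor
    · exact (natDegree_add_le _ _).trans (max_le_max hb2le le_rfl)
    · intro hne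
      rcases Nat.eq_zero_or_pos H with hH0 | hH1
      · -- then 2^{n-1}*H = 0 ≠ G, so G ≥ 1
        rw [hH0, mul_zero] at hne hb2le ⊢
        have hlt : (b ^ 2).natDegree < g.natDegree := by omega
        rw [natDegree_add_eq_right_of_natDegree_lt hlt, Nat.max_eq_right (by omega)]
      · have hb2 : (b ^ 2).natDegree = 2 ^ (n - 1) * H := by
          rw [natDegree_pow, (psi_deg h (n - 2)).2 hH1, ← mul_assoc, ← pow_succ']
          congr 2
          omega
        rcases lt_or_gt_of_ne (hb2 ▸ hne : (b ^ 2).natDegree ≠ g.natDegree) with hlt | hgt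
        · rw [natDegree_add_eq_right_of_natDegree_lt hlt, Nat.max_eq_right (by omega)]
        · rw [natDegree_add_eq_left_of_natDegree_lt hgt, hb2,
            Nat.max_eq_left (by omega)]
  refine ⟨main, fun hH1 => ?_⟩
  set N := g.natDegree + 2 with hN
  have hlarge : ∀ n, N ≤ n →
      ((fun x => (x - γ) ^ 2 + g)^[n] γ).natDegree = 2 ^ (n - 1) * H := by
    intro n hn
    have hn2 : 2 ≤ n := by omega
    have hgt : g.natDegree < 2 ^ (n - 1) * H := by
      calc g.natDegree < 2 ^ (n - 1) := by
            calc g.natDegree ≤ n - 2 := by omega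
              _ < 2 ^ (n - 2) := Nat.lt_two_pow_self
              _ ≤ 2 ^ (n - 1) := Nat.pow_le_pow_right (by norm_num) (by omega)
        _ = 2 ^ (n - 1) * 1 := (mul_one _).symm
        _ ≤ 2 ^ (n - 1) * H := Nat.mul_le_mul_left _ hH1
    rw [(main n hn2).2 (by omega), Nat.max_eq_left (by omega)]
  refine ⟨⟨N, hlarge⟩, ?_⟩
  have hinj : Function.Injective (fun k : ℕ => (fun x => (x - γ) ^ 2 + g)^[k + N] γ) := by
    intro a c hac
    have ha := hlarge (a + N) (by omega)
    have hc := hlarge (c + N) (by omega)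
    have : 2 ^ (a + N - 1) * H = 2 ^ (c + N - 1) * H := by
      rw [← ha, ← hc]; simpa using congrArg natDegree hac
    have hpow : (2:ℕ) ^ (a + N - 1) = 2 ^ (c + N - 1) := by
      have := Nat.eq_of_mul_eq_mul_right (by omega : 0 < H) this
      exact this
    have := Nat.pow_right_injective (le_refl 2) hpow
    omega
  exact Set.Infinite.mono (Set.range_subset_iff.mpr fun k => ⟨k + N, rfl⟩)
    (Set.infinite_range_of_injective hinj)
end

section
/- Let φ be a quadratic polynomial over a field K of characteristic ≠ 2, written φ(x) = (x-γ)² + c, and suppose φ^n is separable for all n. For each m ≥ 2 the map Φ_m(x,y) = (φ^{m-1}(x), y·(φ^{m-2}(x) - γ)) defines a morphism from the affine curve C_{2,m} : y² = φ^m(x) to the elliptic-type curve E_φ : Y² = (X - c)·φ(X). -/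
open Polynomial

/-- the map `Φ_m(x,y) = (φ^{m-1}(x), y·(φ^{m-2}(x) - γ))` sends points of
the curve `y² = φ^m(x)` to points of `E_φ : Y² = (X - c)·φ(X)`, where
`φ(x) = (x - γ)² + c`. -/
theorem map_to_elliptic {K : Type*} [Field K] (h2 : (2 : K) ≠ 0) (γ c : K)
    (hsep : ∀ n, 1 ≤ n →
      ((fun q : K[X] => q.comp ((X - C γ) ^ 2 + C c))^[n] (X : K[X])).Separable) :
    ∀ m, 2 ≤ m → ∀ x y : K,
      y ^ 2 = (fun z => (z - γ) ^ 2 + c)^[m] x →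
      (y * ((fun z => (z - γ) ^ 2 + c)^[m - 2] x - γ)) ^ 2 =
        ((fun z => (z - γ) ^ 2 + c)^[m - 1] x - c) *
          (((fun z => (z - γ) ^ 2 + c)^[m - 1] x - γ) ^ 2 + c) := by
  rintro m hm x y hy
  obtain ⟨k, rfl⟩ : ∃ k, m = k + 2 := ⟨m - 2, by omega⟩
  simp only [Nat.add_sub_cancel, show k + 2 - 1 = k + 1 from rfl] at *
  rw [Function.iterate_succ_apply', Function.iterate_succ_apply'] at hy
  rw [Function.iterate_succ_apply', mul_pow, hy]
  ring
end

section
/- Let q be odd, K = 𝔽_q(t), and φ(x) = (x - γ)² + c ∈ K[x] a quadratic polynomial such that the adjusted critical orbit {-φ(γ)} ∪ {φ^n(γ) : n ≥ 2} contains no squares in K. Then for every n ≥ 1, the iterate φ^n is irreducible over K. -/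
open Polynomial IntermediateField


lemma norm_gen_sub_algebraMap {K F : Type*} [Field K] [Field F] [Algebra K F]
    (pb : PowerBasis K F) (c : K) :
    Algebra.norm K (pb.gen - algebraMap K F c) =
      (-1) ^ pb.dim * (minpoly K pb.gen).eval c := by
  have hint : IsIntegral K (pb.gen - algebraMap K F c) :=
    pb.isIntegral_gen.sub isIntegral_algebraMap
  have hmem : pb.gen ∈ Algebra.adjoin K ({pb.gen - algebraMap K F c} : Set F) := by
    have h1 : pb.gen - algebraMap K F c ∈
        Algebra.adjoin K ({pb.gen - algebraMap K F c} : Set F) :=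
      Algebra.subset_adjoin rfl
    have h2 : algebraMap K F c ∈
        Algebra.adjoin K ({pb.gen - algebraMap K F c} : Set F) :=
      Subalgebra.algebraMap_mem _ c
    simpa using add_mem h1 h2
  let pb' := PowerBasis.ofAdjoinEqTop hint (pb.adjoin_eq_top_of_gen_mem_adjoin hmem)
  have hgen : pb'.gen = pb.gen - algebraMap K F c := by
    simp [pb', PowerBasis.ofAdjoinEqTop_gen]
  have hmp : minpoly K (pb.gen - algebraMap K F c) =
      (minpoly K pb.gen).comp (X + C c) := minpoly.sub_algebraMap pb.gen c
  have hdim : pb'.dim = pb.dim := by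
    have := pb'.natDegree_minpoly
    rw [hgen, hmp] at this
    rw [← this, natDegree_comp, natDegree_X_add_C, mul_one, pb.natDegree_minpoly]
  calc Algebra.norm K (pb.gen - algebraMap K F c)
      = (-1) ^ pb'.dim * (minpoly K pb'.gen).coeff 0 := by
        rw [← hgen]; exact Algebra.PowerBasis.norm_gen_eq_coeff_zero_minpoly pb'
    _ = (-1) ^ pb.dim * (minpoly K pb.gen).eval c := by
        rw [hdim, hgen, hmp, coeff_zero_eq_eval_zero, eval_comp]
        simp

-- a monic quadratic (X - γ')² - C s with s not a square is irreducible
lemma quad_irred {F : Type*} [Field F] (γ' s : F) (h : ¬ IsSquare s) :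
    Irreducible ((X - C γ') ^ 2 - C s) := by
  have hPm : ((X - C γ') ^ 2 - C s).Monic := by
    rw [sub_eq_add_neg, ← C_neg]
    apply Monic.add_of_left ((monic_X_sub_C γ').pow 2)
    rw [degree_pow, degree_X_sub_C]
    exact lt_of_le_of_lt (degree_C_le) (by norm_num)
  have hPdeg : ((X - C γ') ^ 2 - C s).natDegree = 2 := by
    compute_degree!
  rw [hPm.irreducible_iff_roots_eq_zero_of_degree_le_three (by omega) (by omega)]
  rw [Multiset.eq_zero_iff_forall_notMem]
  intro y hy
  rw [mem_roots hPm.ne_zero] at hy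
  have hy' : (y - γ') ^ 2 - s = 0 := by
    simpa [IsRoot] using hy
  exact h ⟨y - γ', by linear_combination -hy' - (y - γ') * (y - γ')⟩

-- nonsquareness transfer via the norm
lemma not_isSquare_gen_sub {K F : Type*} [Field K] [Field F] [Algebra K F]
    (pb : PowerBasis K F) (c : K)
    (h : ¬ IsSquare ((-1 : K) ^ pb.dim * (minpoly K pb.gen).eval c)) :
    ¬ IsSquare (pb.gen - algebraMap K F c) := by
  intro hsq
  apply h
  have := hsq.map (Algebra.norm K : F →* K)
  rwa [show (Algebra.norm K : F →* K) (pb.gen - algebraMap K F c)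
      = Algebra.norm K (pb.gen - algebraMap K F c) from rfl,
    norm_gen_sub_algebraMap pb c] at this

set_option maxHeartbeats 1000000 in
lemma key_step {K : Type u} [Field K] (γ c : K) {f : K[X]} (hm : f.Monic)
    (hf : Irreducible f) (hns : ¬ IsSquare ((-1 : K) ^ f.natDegree * f.eval c)) :
    Irreducible (f.comp ((X - C γ) ^ 2 + C c)) := by
  have hΦm : ((X - C γ) ^ 2 + C c).Monic := by
    apply Monic.add_of_left ((monic_X_sub_C γ).pow 2)
    rw [degree_pow, degree_X_sub_C]
    exact lt_of_le_of_lt (degree_C_le) (by norm_num)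
  refine Polynomial.irreducible_comp hm hΦm hf ?_
  intro E _ _ x hx
  have hxint : IsIntegral K x := by
    by_contra h
    exact hm.ne_zero (hx ▸ minpoly.eq_zero h)
  have hmap : (((X - C γ) ^ 2 + C c).map (algebraMap K K⟮x⟯) - C (AdjoinSimple.gen K x))
      = (X - C (algebraMap K K⟮x⟯ γ)) ^ 2
        - C (AdjoinSimple.gen K x - algebraMap K K⟮x⟯ c) := by
    rw [Polynomial.map_add, Polynomial.map_pow, Polynomial.map_sub, map_X, map_C, map_C, C_sub,
      sub_sub_eq_add_sub]
  rw [hmap]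
  apply quad_irred
  have hpb := not_isSquare_gen_sub (IntermediateField.adjoin.powerBasis hxint) c
  rw [IntermediateField.adjoin.powerBasis_gen, IntermediateField.adjoin.powerBasis_dim,
    IntermediateField.minpoly_gen, hx] at hpb
  exact hpb hns

/-- Stoll's irreducibility criterion over `K = 𝔽_q(t)`, `q` odd.
If no element of the adjusted critical orbit `{-φ(γ)} ∪ {φⁿ(γ) : n ≥ 2}` of the
quadratic `φ(x) = (x-γ)² + c` is a square in `K`, then every iterate `φⁿ` is
irreducible over `K`. -/
theorem iterates_irreducible {Fq : Type*} [Field Fq] [Fintype Fq]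
    (hq : Odd (Fintype.card Fq)) (γ c : RatFunc Fq)
    (hns1 : ¬ IsSquare (-((γ - γ) ^ 2 + c)))
    (hnsn : ∀ n, 2 ≤ n →
      ¬ IsSquare ((fun z : RatFunc Fq => (z - γ) ^ 2 + c)^[n] γ)) :
    ∀ n, 1 ≤ n →
      Irreducible
        ((fun q : (RatFunc Fq)[X] => q.comp ((X - C γ) ^ 2 + C c))^[n]
          (X : (RatFunc Fq)[X])) := by
  have hΦm : ((X - C γ) ^ 2 + C c : (RatFunc Fq)[X]).Monic := by
    apply Monic.add_of_left ((monic_X_sub_C γ).pow 2)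
    rw [degree_pow, degree_X_sub_C]
    exact lt_of_le_of_lt (degree_C_le) (by norm_num)
  have hΦdeg : ((X - C γ) ^ 2 + C c : (RatFunc Fq)[X]).natDegree = 2 := by
    compute_degree!
  have hmon : ∀ n, ((fun q : (RatFunc Fq)[X] => q.comp ((X - C γ) ^ 2 + C c))^[n]
      (X : (RatFunc Fq)[X])).Monic ∧
      ((fun q : (RatFunc Fq)[X] => q.comp ((X - C γ) ^ 2 + C c))^[n]
      (X : (RatFunc Fq)[X])).natDegree = 2 ^ n := by
    intro n
    induction n with
    | zero => simpa using monic_X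
    | succ n ih =>
      rw [Function.iterate_succ_apply']
      exact ⟨ih.1.comp hΦm (by rw [hΦdeg]; omega),
        by rw [natDegree_comp, hΦdeg, ih.2, pow_succ]⟩
  have heval : ∀ n (z : RatFunc Fq),
      ((fun q : (RatFunc Fq)[X] => q.comp ((X - C γ) ^ 2 + C c))^[n]
        (X : (RatFunc Fq)[X])).eval z = (fun w : RatFunc Fq => (w - γ) ^ 2 + c)^[n] z := by
    intro n
    induction n with
    | zero => simp
    | succ n ih =>
      intro z
      rw [Function.iterate_succ_apply', Function.iterate_succ_apply, eval_comp, ih]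
      congr 1
      simp
  intro n hn
  induction n with
  | zero => omega
  | succ n ih =>
    rcases Nat.eq_or_lt_of_le hn with h1 | h2
    · -- n = 0 case
      have hn0 : n = 0 := by omega
      subst hn0
      rw [Function.iterate_succ_apply', Function.iterate_zero_apply]
      show Irreducible ((X : (RatFunc Fq)[X]).comp ((X - C γ) ^ 2 + C c))
      apply key_step γ c monic_X irreducible_X
      simp only [natDegree_X, pow_one, eval_X, neg_one_mul]
      have h0 : -((γ - γ) ^ 2 + c) = -c := by ring
      rwa [h0] at hns1
    · have hn1 : 1 ≤ n := by omega
      have ihn := ih hn1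
      rw [Function.iterate_succ_apply']
      show Irreducible (((fun q : (RatFunc Fq)[X] => q.comp ((X - C γ) ^ 2 + C c))^[n]
        (X : (RatFunc Fq)[X])).comp ((X - C γ) ^ 2 + C c))
      apply key_step γ c (hmon n).1 ihn
      rw [(hmon n).2]
      have heven : Even ((2 : ℕ) ^ n) := Nat.even_pow.mpr ⟨even_two, by omega⟩
      rw [heven.neg_one_pow, one_mul, heval n c]
      have h := hnsn (n + 1) (by omega)
      rw [Function.iterate_succ_apply] at h
      simp only [show (γ - γ) ^ 2 + c = c from by ring] at h
      exact h
end
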